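/- Let p1, p2, q1, q2 be finite types and let M11 (p1 × q1), M12 (p1 × q2), M21 (p2 × q1), M22 (p2 × q2) be real matrices. The following are equivalent: (1) for every real matrix Δ1 (q2 × p2) with ‖Δ1‖ ≤ 1, the matrix I - M22*Δ1 is invertible and ‖M11 + M12*Δ1*(I - M22*Δ1)⁻¹*M21‖ < 1; (2) for every pair of real matrices Δ1 (q2 × p2) and Δ2 (q1 × p1) with ‖Δ1‖ ≤ 1 and ‖Δ2‖ ≤ 1, the matrix I - (fromBlocks M11 M12 M21 M22) * (fromBlocks Δ2 0 0 Δ1) is invertible. -/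

import Mathlib

open Matrix

attribute [local instance] Matrix.linftyOpNormedAddCommGroup

private lemma mul_sign_eq_abs (x : ℝ) : x * Real.sign x = |x| := by
  rcases lt_trichotomy x 0 with h | h | h
  · rw [Real.sign_of_neg h, abs_of_neg h]; ring
  · simp [h]
  · rw [Real.sign_of_pos h, abs_of_pos h]; ring

private lemma isUnit_fromBlocks_iff {p q : Type*} [Fintype p] [Fintype q]
    [DecidableEq p] [DecidableEq q]
    (A : Matrix p p ℝ) (B : Matrix p q ℝ) (C : Matrix q p ℝ) {D : Matrix q q ℝ}
    (hD : IsUnit D) :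
    IsUnit (fromBlocks A B C D) ↔ IsUnit (A - B * D⁻¹ * C) := by
  obtain ⟨iD⟩ := hD.nonempty_invertible
  rw [Matrix.isUnit_iff_isUnit_det, det_fromBlocks₂₂, IsUnit.mul_iff,
    Matrix.invOf_eq_nonsing_inv, ← Matrix.isUnit_iff_isUnit_det,
    ← Matrix.isUnit_iff_isUnit_det]
  exact and_iff_right hD

/-- Small-gain direction: a strict contraction perturbation of the identity is invertible. -/
private lemma isUnit_one_sub_of_norm_lt {p : Type*} [Fintype p] [DecidableEq p]
    {X : Matrix p p ℝ} (hX : ‖X‖ < 1) : IsUnit (1 - X) := by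
  rw [Matrix.isUnit_iff_isUnit_det, isUnit_iff_ne_zero]
  intro hdet
  obtain ⟨v, hv, hXv⟩ := (Matrix.exists_mulVec_eq_zero_iff).mpr hdet
  have hXv' : X *ᵥ v = v := by
    have := hXv
    rwa [Matrix.sub_mulVec, Matrix.one_mulVec, sub_eq_zero, eq_comm] at this
  have hle : ‖v‖ ≤ ‖X‖ * ‖v‖ := by
    calc ‖v‖ = ‖X *ᵥ v‖ := by rw [hXv']
    _ ≤ ‖X‖ * ‖v‖ := Matrix.linfty_opNorm_mulVec X v
  have hvpos : 0 < ‖v‖ := norm_pos_iff.mpr hv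
  nlinarith

/-- If `‖F‖ ≥ 1`, there is a contraction `Δ` making `1 - F * Δ` singular. -/
private lemma exists_contraction_singular {p q : Type*} [Fintype p] [Fintype q]
    [DecidableEq p] [DecidableEq q] {F : Matrix p q ℝ} (hF : 1 ≤ ‖F‖) :
    ∃ Δ : Matrix q p ℝ, ‖Δ‖ ≤ 1 ∧ ¬ IsUnit (1 - F * Δ) := by
  set c : ℝ := ‖F‖ with hc
  have hc0 : (0 : ℝ) < c := lt_of_lt_of_le one_pos hF
  -- find a row attaining the norm
  have hne : (Finset.univ : Finset p).Nonempty := by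
    by_contra hemp
    rw [Finset.not_nonempty_iff_eq_empty] at hemp
    have : ‖F‖₊ = 0 := by rw [Matrix.linfty_opNNNorm_def, hemp]; simp
    have : ‖F‖ = 0 := by rw [← coe_nnnorm, this]; simp
    linarith
  obtain ⟨i₀, -, hi₀⟩ := Finset.exists_mem_eq_sup (Finset.univ : Finset p) hne
    (fun i : p => ∑ j : q, ‖F i j‖₊)
  have hrow : ∑ j : q, |F i₀ j| = c := by
    have h1 : ‖F‖₊ = ∑ j : q, ‖F i₀ j‖₊ := by rw [Matrix.linfty_opNNNorm_def, hi₀]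
    have := congrArg ((↑) : NNReal → ℝ) h1
    rw [coe_nnnorm] at this
    push_cast at this
    simp only [coe_nnnorm, Real.norm_eq_abs] at this
    linarith [this]
  set Δ : Matrix q p ℝ := fun j i => if i = i₀ then Real.sign (F i₀ j) / c else 0 with hΔ
  set v : p → ℝ := fun i => (∑ j : q, F i j * Real.sign (F i₀ j)) / c with hv
  have hvi₀ : v i₀ = 1 := by
    simp only [hv]
    rw [div_eq_one_iff_eq (ne_of_gt hc0), ← hrow]
    exact Finset.sum_congr rfl fun j _ => mul_sign_eq_abs _
  refine ⟨Δ, ?_, ?_⟩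
  · -- norm bound
    have : ‖Δ‖₊ ≤ 1 := by
      rw [Matrix.linfty_opNNNorm_def]
      refine Finset.sup_le fun j _ => ?_
      have hsum : ∑ i : p, ‖Δ j i‖₊ = ‖Real.sign (F i₀ j) / c‖₊ := by
        simp [hΔ, apply_ite (fun x : ℝ => ‖x‖₊)]
      rw [hsum, ← NNReal.coe_le_coe]
      push_cast
      rw [Real.norm_eq_abs, abs_div, abs_of_pos hc0, div_le_one hc0]
      calc |Real.sign (F i₀ j)| ≤ 1 := by
            rcases lt_trichotomy (F i₀ j) 0 with h | h | h <;>
              simp [Real.sign_of_neg, Real.sign_of_pos, h, le_of_lt, abs_of_neg, abs_of_pos]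
        _ ≤ c := hF
    calc ‖Δ‖ = ((‖Δ‖₊ : NNReal) : ℝ) := (coe_nnnorm _).symm
      _ ≤ ((1 : NNReal) : ℝ) := by exact_mod_cast this
      _ = 1 := by norm_num
  · -- singularity
    intro hU
    have hFΔ : ∀ i k, (F * Δ) i k = if k = i₀ then v i else 0 := by
      intro i k
      by_cases h : k = i₀
      · subst h
        rw [Matrix.mul_apply]
        simp only [hΔ, hv, if_true, ↓reduceIte, Finset.sum_div, mul_div_assoc]
      · rw [Matrix.mul_apply]
        simp [hΔ, h]
    have hker : (1 - F * Δ) *ᵥ v = 0 := by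
      have h2 : (F * Δ) *ᵥ v = v := by
        funext i
        simp only [Matrix.mulVec, dotProduct]
        calc ∑ k, (F * Δ) i k * v k = ∑ k, (if k = i₀ then v i else 0) * v k :=
              Finset.sum_congr rfl fun k _ => by rw [hFΔ]
          _ = v i := by simp [ite_mul, hvi₀]
      rw [Matrix.sub_mulVec, Matrix.one_mulVec, h2, sub_self]
    have hvne : v ≠ 0 := by
      intro h
      have := congrFun h i₀
      rw [hvi₀] at this
      simp at this
    have hdet : (1 - F * Δ).det = 0 := Matrix.exists_mulVec_eq_zero_iff.mp ⟨v, hvne, hker⟩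
    rw [Matrix.isUnit_iff_isUnit_det, hdet] at hU
    exact hU.ne_zero rfl

private lemma block_identity {p1 p2 q1 q2 : Type*}
    [Fintype p1] [Fintype p2] [Fintype q1] [Fintype q2] [DecidableEq p1] [DecidableEq p2]
    (M11 : Matrix p1 q1 ℝ) (M12 : Matrix p1 q2 ℝ)
    (M21 : Matrix p2 q1 ℝ) (M22 : Matrix p2 q2 ℝ)
    (Δ1 : Matrix q2 p2 ℝ) (Δ2 : Matrix q1 p1 ℝ) :
    1 - fromBlocks M11 M12 M21 M22 * fromBlocks Δ2 0 0 Δ1 =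
      fromBlocks (1 - M11 * Δ2) (-(M12 * Δ1)) (-(M21 * Δ2)) (1 - M22 * Δ1) := by
  rw [fromBlocks_multiply, ← fromBlocks_one, sub_eq_add_neg, fromBlocks_neg, fromBlocks_add]
  simp [sub_eq_add_neg]

/-- Proposition 1: robust performance of the lower linear fractional transform of
`M = [[M11, M12], [M21, M22]]` with respect to all contractions `Δ1` is equivalent to
robust well-posedness of `M` against augmented block-diagonal contractions
`blkdiag(Δ2, Δ1)`, in the `ℓ∞ → ℓ∞` induced norm. -/
theorem stmt5 {p1 p2 q1 q2 : Type*}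
    [Fintype p1] [Fintype p2] [Fintype q1] [Fintype q2]
    [DecidableEq p1] [DecidableEq p2] [DecidableEq q1] [DecidableEq q2]
    (M11 : Matrix p1 q1 ℝ) (M12 : Matrix p1 q2 ℝ)
    (M21 : Matrix p2 q1 ℝ) (M22 : Matrix p2 q2 ℝ) :
    (∀ Δ1 : Matrix q2 p2 ℝ, ‖Δ1‖ ≤ 1 →
        IsUnit (1 - M22 * Δ1) ∧ ‖M11 + M12 * Δ1 * (1 - M22 * Δ1)⁻¹ * M21‖ < 1) ↔
    (∀ (Δ1 : Matrix q2 p2 ℝ) (Δ2 : Matrix q1 p1 ℝ), ‖Δ1‖ ≤ 1 → ‖Δ2‖ ≤ 1 →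
        IsUnit (1 - fromBlocks M11 M12 M21 M22 * fromBlocks Δ2 0 0 Δ1)) := by
  have key : ∀ (Δ1 : Matrix q2 p2 ℝ) (Δ2 : Matrix q1 p1 ℝ), IsUnit (1 - M22 * Δ1) →
      (IsUnit (1 - fromBlocks M11 M12 M21 M22 * fromBlocks Δ2 0 0 Δ1) ↔
        IsUnit (1 - (M11 + M12 * Δ1 * (1 - M22 * Δ1)⁻¹ * M21) * Δ2)) := by
    intro Δ1 Δ2 hD
    rw [block_identity, isUnit_fromBlocks_iff _ _ _ hD]
    congr! 1
    simp only [Matrix.add_mul, Matrix.neg_mul, Matrix.mul_neg, neg_neg, Matrix.mul_assoc]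
    abel
  constructor
  · intro h Δ1 Δ2 h1 h2
    obtain ⟨hD, hF⟩ := h Δ1 h1
    rw [key Δ1 Δ2 hD]
    refine isUnit_one_sub_of_norm_lt (lt_of_le_of_lt ?_ hF)
    calc ‖(M11 + M12 * Δ1 * (1 - M22 * Δ1)⁻¹ * M21) * Δ2‖
        ≤ ‖M11 + M12 * Δ1 * (1 - M22 * Δ1)⁻¹ * M21‖ * ‖Δ2‖ :=
          Matrix.linfty_opNorm_mul _ _
      _ ≤ ‖M11 + M12 * Δ1 * (1 - M22 * Δ1)⁻¹ * M21‖ * 1 := by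
          refine mul_le_mul_of_nonneg_left h2 (norm_nonneg _)
      _ = ‖M11 + M12 * Δ1 * (1 - M22 * Δ1)⁻¹ * M21‖ := mul_one _
  · intro h Δ1 h1
    have hD : IsUnit (1 - M22 * Δ1) := by
      have h0 := h Δ1 0 h1 (by simp)
      rw [block_identity] at h0
      rw [Matrix.isUnit_iff_isUnit_det] at h0 ⊢
      simp only [Matrix.mul_zero, sub_zero, neg_zero] at h0
      rwa [Matrix.det_fromBlocks_zero₂₁, Matrix.det_one, one_mul] at h0
    refine ⟨hD, ?_⟩
    by_contra hF
    push_neg at hF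
    obtain ⟨Δ2, h2, hsing⟩ := exists_contraction_singular hF
    exact hsing ((key Δ1 Δ2 hD).mp (h Δ1 Δ2 h1 h2))
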